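/- Let d ∈ ℕ, d ≥ 1, and let γ : [0,1] → M_d(ℂ) be a differentiable path of unitary matrices with Length(γ) := ∫₀¹ ‖γ'(τ)‖_op dτ < ∞. For unitaries Û_1,…,Û_n and indices k⁺, k⁻ ∈ {1,…,d}^n, define the generic bi-probability Q_{Û_n,…,Û_1}(k⁺,k⁻) := δ_{k_n⁺,k_n⁻} · δ_{k_1⁺,k_1⁻} · tr[(Û_n E_{k_n⁺} Û_n* ⋯ Û_1 E_{k_1⁺} Û_1*)·(Û_1 E_{k_1⁻} Û_1* ⋯ Û_n E_{k_n⁻} Û_n*)], where E_k denotes the rank-one orthogonal projection onto the k-th standard basis vector of ℂ^d. Then for every n ∈ ℕ and all 0 ≤ τ_1 < … < τ_n ≤ 1, setting Û_j := γ(τ_j), one has Σ_{k⁺,k⁻ ∈ {1,…,d}^n} |Q_{Û_n,…,Û_1}(k⁺,k⁻)| ≤ d² · exp(2(d−1)·Length(γ)). -/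

import Mathlib

open Matrix
open scoped Matrix.Norms.L2Operator

/-- The generic bi-probability
`Q_{Û_n,…,Û_1}(k⁺,k⁻) = δ_{k_n⁺,k_n⁻} δ_{k_1⁺,k_1⁻} tr[(Û_n E_{k_n⁺} Û_n* ⋯ Û_1 E_{k_1⁺} Û_1*)
(Û_1 E_{k_1⁻} Û_1* ⋯ Û_n E_{k_n⁻} Û_n*)]`, where `E_k` is the rank-one projection onto the
`k`-th standard basis vector; the index `j = 0` corresponds to `Û_1`. -/
noncomputable def genericBiProb {d n : ℕ} (V : Fin (n + 1) → Matrix (Fin d) (Fin d) ℂ)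
    (kp km : Fin (n + 1) → Fin d) : ℂ :=
  (if kp (Fin.last n) = km (Fin.last n) then 1 else 0) *
    (if kp 0 = km 0 then 1 else 0) *
      Matrix.trace
        ((List.ofFn fun j =>
            V j * Matrix.single (kp j) (kp j) 1 * (V j)ᴴ).reverse.prod *
          (List.ofFn fun j =>
            V j * Matrix.single (km j) (km j) 1 * (V j)ᴴ).prod)

variable {d : ℕ}
open MeasureTheory intervalIntegral

variable {d : ℕ}

lemma conj_basis (V : Matrix (Fin d) (Fin d) ℂ) (k : Fin d) :
    V * Matrix.single k k 1 * Vᴴ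
      = vecMulVec (fun a => V a k) (star fun a => V a k) := by
  ext a b
  simp [mul_apply, Matrix.single, vecMulVec_apply, conjTranspose_apply, ite_and,
    Finset.sum_ite_eq, Finset.sum_ite_eq', Finset.mul_sum, Finset.sum_mul]

lemma vmv_mul (u v w z : Fin d → ℂ) :
    vecMulVec u (star v) * vecMulVec w (star z)
      = (star v ⬝ᵥ w) • vecMulVec u (star z) := by
  ext a b
  simp only [mul_apply, vecMulVec_apply, Matrix.smul_apply, dotProduct, smul_eq_mul, Pi.star_apply,
    Finset.sum_mul]
  exact Finset.sum_congr rfl fun c _ => by ring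

lemma trace_vmv (u v : Fin d → ℂ) :
    Matrix.trace (vecMulVec u (star v)) = star v ⬝ᵥ u := by
  simp [Matrix.trace, vecMulVec_apply, dotProduct, Matrix.diag, mul_comm]

lemma dot_eq_entry (A B : Matrix (Fin d) (Fin d) ℂ) (k l : Fin d) :
    star (fun a => A a k) ⬝ᵥ (fun a => B a l) = (Aᴴ * B) k l := by
  simp [dotProduct, mul_apply, conjTranspose_apply]

lemma revProd (n : ℕ) (x : Fin (n + 1) → Fin d → ℂ) :
    (List.ofFn fun j => vecMulVec (x j) (star (x j))).reverse.prod
      = (∏ j : Fin n, (star (x j.succ) ⬝ᵥ x j.castSucc)) •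
          vecMulVec (x (Fin.last n)) (star (x 0)) := by
  induction n with
  | zero => simp
  | succ n ih =>
    rw [List.ofFn_succ, List.reverse_cons, List.prod_append, List.prod_cons, List.prod_nil,
      mul_one, ih (fun j => x j.succ), smul_mul_assoc, vmv_mul, smul_smul,
      Fin.prod_univ_succ]
    simp only [Fin.succ_castSucc, Fin.castSucc_zero, Fin.succ_last, Fin.succ_zero_eq_one]
    rw [mul_comm]

lemma fwdProd (n : ℕ) (y : Fin (n + 1) → Fin d → ℂ) :
    (List.ofFn fun j => vecMulVec (y j) (star (y j))).prod
      = (∏ j : Fin n, (star (y j.castSucc) ⬝ᵥ y j.succ)) •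
          vecMulVec (y 0) (star (y (Fin.last n))) := by
  induction n with
  | zero => simp
  | succ n ih =>
    rw [List.ofFn_succ, List.prod_cons, ih (fun j => y j.succ), mul_smul_comm, vmv_mul,
      smul_smul, Fin.prod_univ_succ]
    simp only [Fin.succ_castSucc, Fin.castSucc_zero, Fin.succ_last, Fin.succ_zero_eq_one]
    rw [mul_comm]

lemma revProd' (n : ℕ) (V : Fin (n + 1) → Matrix (Fin d) (Fin d) ℂ) (k : Fin (n + 1) → Fin d) :
    (List.ofFn fun j => V j * Matrix.single (k j) (k j) 1 * (V j)ᴴ).reverse.prod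
      = (∏ j : Fin n, ((V j.succ)ᴴ * V j.castSucc) (k j.succ) (k j.castSucc)) •
          vecMulVec (fun a => V (Fin.last n) a (k (Fin.last n))) (star fun a => V 0 a (k 0)) := by
  simpa only [dot_eq_entry, conj_basis] using revProd n (fun j a => V j a (k j))

lemma fwdProd' (n : ℕ) (V : Fin (n + 1) → Matrix (Fin d) (Fin d) ℂ) (k : Fin (n + 1) → Fin d) :
    (List.ofFn fun j => V j * Matrix.single (k j) (k j) 1 * (V j)ᴴ).prod
      = (∏ j : Fin n, ((V j.castSucc)ᴴ * V j.succ) (k j.castSucc) (k j.succ)) •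
          vecMulVec (fun a => V 0 a (k 0)) (star fun a => V (Fin.last n) a (k (Fin.last n))) := by
  simpa only [dot_eq_entry, conj_basis] using fwdProd n (fun j a => V j a (k j))

lemma entry_conj (A B : Matrix (Fin d) (Fin d) ℂ) (k l : Fin d) :
    ‖(Bᴴ * A) l k‖ = ‖(Aᴴ * B) k l‖ := by
  have h : (Bᴴ * A) l k = star ((Aᴴ * B) k l) := by
    rw [← Matrix.conjTranspose_apply, Matrix.conjTranspose_mul, Matrix.conjTranspose_conjTranspose]
  rw [h, norm_star]

lemma coord_le (x : EuclideanSpace ℂ (Fin d)) (a : Fin d) : ‖x a‖ ≤ ‖x‖ := by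
  rw [EuclideanSpace.norm_eq]
  have h : ‖x a‖ ^ 2 ≤ ∑ i, ‖x i‖ ^ 2 :=
    Finset.single_le_sum (f := fun i => ‖x i‖ ^ 2) (fun i _ => sq_nonneg _) (Finset.mem_univ a)
  calc ‖x a‖ = Real.sqrt (‖x a‖ ^ 2) := (Real.sqrt_sq (norm_nonneg _)).symm
    _ ≤ _ := Real.sqrt_le_sqrt h

lemma entry_le_norm (A : Matrix (Fin d) (Fin d) ℂ) (a b : Fin d) : ‖A a b‖ ≤ ‖A‖ := by
  classical
  have h1 : A a b = ((EuclideanSpace.equiv (Fin d) ℂ).symm (A *ᵥ (EuclideanSpace.single b 1))) a := by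
    have : (EuclideanSpace.single b (1:ℂ) : Fin d → ℂ) = Pi.single b 1 := rfl
    simp [this, Matrix.mulVec_single]
  have h2 := Matrix.l2_opNorm_mulVec A (EuclideanSpace.single b 1)
  rw [EuclideanSpace.norm_single] at h2
  rw [norm_one, mul_one] at h2
  exact le_trans (h1 ▸ coord_le _ a) h2

lemma norm_genericBiProb_le (n : ℕ) (V : Fin (n + 1) → Matrix (Fin d) (Fin d) ℂ)
    (hV : ∀ j, V j ∈ Matrix.unitaryGroup (Fin d) ℂ) (kp km : Fin (n + 1) → Fin d) :
    ‖genericBiProb V kp km‖ ≤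
      (if kp (Fin.last n) = km (Fin.last n) then (1:ℝ) else 0) *
        (if kp 0 = km 0 then (1:ℝ) else 0) *
          ((∏ j : Fin n, ‖((V j.succ)ᴴ * V j.castSucc) (kp j.succ) (kp j.castSucc)‖) *
            (∏ j : Fin n, ‖((V j.succ)ᴴ * V j.castSucc) (km j.succ) (km j.castSucc)‖)) := by
  have h0 : (V 0)ᴴ * V 0 = 1 := by
    rw [← Matrix.star_eq_conjTranspose]; exact Matrix.mem_unitaryGroup_iff'.mp (hV 0)
  have hl : (V (Fin.last n))ᴴ * V (Fin.last n) = 1 := by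
    rw [← Matrix.star_eq_conjTranspose]; exact Matrix.mem_unitaryGroup_iff'.mp (hV _)
  rw [genericBiProb, revProd' n V kp, fwdProd' n V km, smul_mul_smul_comm, vmv_mul, smul_smul,
    Matrix.trace_smul, trace_vmv, dot_eq_entry, dot_eq_entry, h0, hl]
  by_cases hL : kp (Fin.last n) = km (Fin.last n)
  · by_cases h00 : kp 0 = km 0
    · rw [if_pos hL, if_pos h00, if_pos hL, if_pos h00, Matrix.one_apply, Matrix.one_apply,
        if_pos h00, if_pos hL.symm]
      simp only [mul_one, one_mul, smul_eq_mul, norm_mul, norm_prod]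
      have e2 : ∏ j : Fin n, ‖((V j.castSucc)ᴴ * V j.succ) (km j.castSucc) (km j.succ)‖
          = ∏ j : Fin n, ‖((V j.succ)ᴴ * V j.castSucc) (km j.succ) (km j.castSucc)‖ :=
        Finset.prod_congr rfl fun j _ => entry_conj _ _ _ _
      rw [e2]
    · simp [h00]
  · simp [hL]

lemma sumM (n : ℕ) (w : Fin n → Matrix (Fin d) (Fin d) ℝ) (s t : Fin d) :
    ∑ k : Fin (n + 1) → Fin d,
      (if k (Fin.last n) = s then (1:ℝ) else 0) * (if k 0 = t then 1 else 0) *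
        ∏ j : Fin n, w j (k j.succ) (k j.castSucc)
      = (List.ofFn w).reverse.prod s t := by
  induction n generalizing s t with
  | zero =>
    rw [← Equiv.sum_comp (Equiv.funUnique (Fin 1) (Fin d)).symm]
    simp [Matrix.one_apply, ite_and, eq_comm, Finset.sum_ite_eq']
  | succ n ih =>
    rw [← Equiv.sum_comp (Fin.consEquiv (fun _ : Fin (n + 2) => Fin d)), Fintype.sum_prod_type,
      List.ofFn_succ, List.reverse_cons, List.prod_append, List.prod_cons, List.prod_nil, mul_one,
      Matrix.mul_apply]
    have hih : ∀ u : Fin d,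
        (List.ofFn fun i : Fin n => w i.succ).reverse.prod s u
          = ∑ q : Fin (n + 1) → Fin d,
              (if q (Fin.last n) = s then (1:ℝ) else 0) * (if q 0 = u then 1 else 0) *
                ∏ j : Fin n, w j.succ (q j.succ) (q j.castSucc) :=
      fun u => (ih (fun i => w i.succ) s u).symm
    simp only [hih, Finset.sum_mul]
    conv_rhs => rw [Finset.sum_comm]
    conv_lhs => rw [Finset.sum_comm]
    refine Finset.sum_congr rfl fun q _ => ?_
    simp only [Fin.consEquiv, Equiv.coe_fn_mk]
    have hlast : ∀ x : Fin d, (Fin.cons x q : Fin (n+2) → Fin d) (Fin.last (n + 1)) = q (Fin.last n) := by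
      intro x; rw [← Fin.succ_last, Fin.cons_succ]
    have hprod : ∀ x : Fin d,
        (∏ j : Fin (n + 1), w j ((Fin.cons x q : Fin (n+2) → Fin d) j.succ)
            ((Fin.cons x q : Fin (n+2) → Fin d) j.castSucc))
          = w 0 (q 0) x * ∏ j : Fin n, w j.succ (q j.succ) (q j.castSucc) := by
      intro x
      rw [Fin.prod_univ_succ]
      simp only [← Fin.succ_castSucc, Fin.cons_succ, Fin.castSucc_zero, Fin.cons_zero]
    simp only [hlast, hprod, Fin.cons_zero]
    by_cases h1 : q (Fin.last n) = s
    · simp only [h1, if_true, one_mul, ite_mul, zero_mul, mul_ite, mul_zero]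
      rw [Finset.sum_ite_eq, Finset.sum_ite_eq']
      simp
      try ring
    · simp [h1]

lemma revprod_nonneg (n : ℕ) (w : Fin n → Matrix (Fin d) (Fin d) ℝ)
    (h : ∀ j a b, 0 ≤ w j a b) (s t : Fin d) :
    0 ≤ (List.ofFn w).reverse.prod s t := by
  induction n generalizing s t with
  | zero => simp [Matrix.one_apply]; positivity
  | succ n ih =>
    rw [List.ofFn_succ, List.reverse_cons, List.prod_append, List.prod_cons, List.prod_nil,
      mul_one, Matrix.mul_apply]
    exact Finset.sum_nonneg fun u _ =>
      mul_nonneg (ih (fun i => w i.succ) (fun j a b => h j.succ a b) s u) (h 0 u t)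

lemma revprod_le (hd : 1 ≤ d) (n : ℕ) (w : Fin n → Matrix (Fin d) (Fin d) ℝ) (ε : Fin n → ℝ)
    (hε : ∀ j, 0 ≤ ε j) (h0 : ∀ j a b, 0 ≤ w j a b) (h1 : ∀ j a, w j a a ≤ 1)
    (h2 : ∀ j a b, a ≠ b → w j a b ≤ ε j) (s t : Fin d) :
    (List.ofFn w).reverse.prod s t ≤ ∏ j : Fin n, (1 + ((d : ℝ) - 1) * ε j) := by
  have hd1 : (1:ℝ) ≤ (d:ℝ) := by exact_mod_cast hd
  induction n generalizing s t with
  | zero =>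
    simp only [List.ofFn_zero, List.reverse_nil, List.prod_nil, Finset.univ_eq_empty,
      Finset.prod_empty, Matrix.one_apply]
    split <;> norm_num
  | succ n ih =>
    have hP' : 0 ≤ ∏ j : Fin n, (1 + ((d:ℝ) - 1) * ε j.succ) :=
      Finset.prod_nonneg fun j _ => by nlinarith [hε j.succ]
    rw [List.ofFn_succ, List.reverse_cons, List.prod_append, List.prod_cons, List.prod_nil,
      mul_one, Matrix.mul_apply, ← Finset.sum_erase_add _ _ (Finset.mem_univ t),
      Fin.prod_univ_succ]
    have hG : ∀ u : Fin d, (List.ofFn fun i : Fin n => w i.succ).reverse.prod s u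
        ≤ ∏ j : Fin n, (1 + ((d:ℝ) - 1) * ε j.succ) :=
      fun u => ih (fun i => w i.succ) (fun i => ε i.succ) (fun i => hε i.succ)
        (fun i => h0 i.succ) (fun i => h1 i.succ) (fun i => h2 i.succ) s u
    have hGn : ∀ u : Fin d, 0 ≤ (List.ofFn fun i : Fin n => w i.succ).reverse.prod s u :=
      fun u => revprod_nonneg n _ (fun i => h0 i.succ) s u
    have step1 : ∑ u ∈ Finset.univ.erase t,
        (List.ofFn fun i : Fin n => w i.succ).reverse.prod s u * w 0 u t
        ≤ ((d : ℝ) - 1) * ((∏ j : Fin n, (1 + ((d:ℝ) - 1) * ε j.succ)) * ε 0) := by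
      have hcard : ((Finset.univ.erase t).card : ℝ) = (d : ℝ) - 1 := by
        rw [Finset.card_erase_of_mem (Finset.mem_univ t)]
        simp [Nat.cast_sub hd]
      calc ∑ u ∈ Finset.univ.erase t,
            (List.ofFn fun i : Fin n => w i.succ).reverse.prod s u * w 0 u t
          ≤ ∑ u ∈ Finset.univ.erase t,
            (∏ j : Fin n, (1 + ((d:ℝ) - 1) * ε j.succ)) * ε 0 := by
            refine Finset.sum_le_sum fun u hu => ?_
            exact mul_le_mul (hG u) (h2 0 u t (Finset.ne_of_mem_erase hu)) (h0 0 u t) hP'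
        _ = ((d : ℝ) - 1) * ((∏ j : Fin n, (1 + ((d:ℝ) - 1) * ε j.succ)) * ε 0) := by
            rw [Finset.sum_const, nsmul_eq_mul, hcard]
    have step2 : (List.ofFn fun i : Fin n => w i.succ).reverse.prod s t * w 0 t t
        ≤ ∏ j : Fin n, (1 + ((d:ℝ) - 1) * ε j.succ) := by
      calc (List.ofFn fun i : Fin n => w i.succ).reverse.prod s t * w 0 t t
          ≤ (∏ j : Fin n, (1 + ((d:ℝ) - 1) * ε j.succ)) * 1 :=
            mul_le_mul (hG t) (h1 0 t) (h0 0 t t) hP'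
        _ = _ := mul_one _
    nlinarith [hε (0 : Fin (n+1))]

open MeasureTheory intervalIntegral

lemma diag_bound {U V : Matrix (Fin d) (Fin d) ℂ} (hU : U ∈ Matrix.unitaryGroup (Fin d) ℂ)
    (hV : V ∈ Matrix.unitaryGroup (Fin d) ℂ) (a : Fin d) : ‖(Vᴴ * U) a a‖ ≤ 1 := by
  have hm : Vᴴ * U ∈ Matrix.unitaryGroup (Fin d) ℂ := by
    rw [← Matrix.star_eq_conjTranspose]
    exact mul_mem (Unitary.star_mem hV) hU
  exact entry_norm_bound_of_unitary hm a a

lemma offdiag_bound (hd : 1 ≤ d) {U V : Matrix (Fin d) (Fin d) ℂ}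
    (hV : V ∈ Matrix.unitaryGroup (Fin d) ℂ) {a b : Fin d} (hab : a ≠ b) :
    ‖(Vᴴ * U) a b‖ ≤ ‖U - V‖ := by
  have : Nontrivial (Matrix (Fin d) (Fin d) ℂ) := by
    have : Nonempty (Fin d) := ⟨⟨0, hd⟩⟩
    infer_instance
  have h1 : (Vᴴ * U) a b = (Vᴴ * U - 1) a b := by
    simp [Matrix.sub_apply, Matrix.one_apply_ne hab]
  have h2 : Vᴴ * U - 1 = Vᴴ * (U - V) := by
    rw [Matrix.mul_sub]
    congr 1
    rw [← Matrix.star_eq_conjTranspose]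
    exact (Matrix.mem_unitaryGroup_iff'.mp hV).symm
  have h3 : ‖Vᴴ * (U - V)‖ = ‖U - V‖ := by
    rw [← Matrix.star_eq_conjTranspose]
    exact CStarRing.norm_mem_unitary_mul (U - V) (Unitary.star_mem hV)
  rw [h1, h2]
  exact h3 ▸ entry_le_norm (Vᴴ * (U - V)) a b

lemma seg_bound (γ : ℝ → Matrix (Fin d) (Fin d) ℂ) (hγdiff : Differentiable ℝ γ)
    (hγint : MeasureTheory.IntegrableOn (fun τ => ‖deriv γ τ‖) (Set.Icc 0 1))
    {a b : ℝ} (hab : a ≤ b) (ha : 0 ≤ a) (hb : b ≤ 1) :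
    ‖γ b - γ a‖ ≤ ∫ t in a..b, ‖deriv γ t‖ := by
  letI : MeasurableSpace (Matrix (Fin d) (Fin d) ℂ) := borel _
  letI : BorelSpace (Matrix (Fin d) (Fin d) ℂ) := ⟨rfl⟩
  have hm : AEStronglyMeasurable (deriv γ) (volume.restrict (Set.Icc (0:ℝ) 1)) :=
    (measurable_deriv γ).aestronglyMeasurable
  have hInt : IntegrableOn (deriv γ) (Set.Icc (0:ℝ) 1) :=
    (integrable_norm_iff hm).mp hγint
  have hInt' : IntervalIntegrable (deriv γ) volume a b := by
    rw [intervalIntegrable_iff_integrableOn_Icc_of_le hab]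
    exact hInt.mono_set (Set.Icc_subset_Icc ha hb)
  have hftc : ∫ t in a..b, deriv γ t = γ b - γ a :=
    integral_eq_sub_of_hasDerivAt (fun t _ => (hγdiff t).hasDerivAt) hInt'
  rw [← hftc]
  exact intervalIntegral.norm_integral_le_integral_norm hab

lemma f_intble (γ : ℝ → Matrix (Fin d) (Fin d) ℂ)
    (hγint : MeasureTheory.IntegrableOn (fun τ => ‖deriv γ τ‖) (Set.Icc 0 1))
    {a b : ℝ} (hab : a ≤ b) (ha : 0 ≤ a) (hb : b ≤ 1) :
    IntervalIntegrable (fun t => ‖deriv γ t‖) volume a b := by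
  rw [intervalIntegrable_iff_integrableOn_Icc_of_le hab]
  exact hγint.mono_set (Set.Icc_subset_Icc ha hb)


/-- uniform bound for the generic bi-probabilities along a differentiable
path `γ` of unitaries of finite length: for all `0 ≤ τ_1 < … < τ_n ≤ 1`, setting
`Û_j := γ(τ_j)`, one has
`Σ_{k⁺,k⁻} |Q_{Û_n,…,Û_1}(k⁺,k⁻)| ≤ d² exp(2(d−1)·Length(γ))`, where
`Length(γ) = ∫₀¹ ‖γ'(τ)‖_op dτ`. -/
theorem genericBiProb_uniform_bound {d : ℕ} (hd : 1 ≤ d)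
    (γ : ℝ → Matrix (Fin d) (Fin d) ℂ)
    (hγu : ∀ τ ∈ Set.Icc (0 : ℝ) 1, γ τ ∈ Matrix.unitaryGroup (Fin d) ℂ)
    (hγdiff : Differentiable ℝ γ)
    (hγint : MeasureTheory.IntegrableOn (fun τ => ‖deriv γ τ‖) (Set.Icc 0 1))
    (n : ℕ) (τ : Fin (n + 1) → ℝ) (hτ : StrictMono τ)
    (hτI : ∀ j, τ j ∈ Set.Icc (0 : ℝ) 1) :
    ∑ kp : Fin (n + 1) → Fin d, ∑ km : Fin (n + 1) → Fin d,
        ‖genericBiProb (fun j => γ (τ j)) kp km‖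
      ≤ (d : ℝ) ^ 2 *
          Real.exp (2 * ((d : ℝ) - 1) * ∫ τ in (0:ℝ)..1, ‖deriv γ τ‖) := by
  
  classical
  haveI : NeZero d := ⟨by omega⟩
  have hd1 : (1:ℝ) ≤ (d:ℝ) := by exact_mod_cast hd
  set V : Fin (n + 1) → Matrix (Fin d) (Fin d) ℂ := fun j => γ (τ j) with hVdef
  have hV : ∀ j, V j ∈ Matrix.unitaryGroup (Fin d) ℂ := fun j => hγu _ (hτI j)
  set w : Fin n → Matrix (Fin d) (Fin d) ℝ :=
    fun j a b => ‖((V j.succ)ᴴ * V j.castSucc) a b‖ with hwdef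
  set ε : Fin n → ℝ := fun j => ∫ t in (τ j.castSucc)..(τ j.succ), ‖deriv γ t‖ with hεdef
  set F : (Fin (n + 1) → Fin d) → ℝ :=
    fun k => ∏ j : Fin n, w j (k j.succ) (k j.castSucc) with hFdef
  set G : Matrix (Fin d) (Fin d) ℝ := (List.ofFn w).reverse.prod with hGdef
  set P : ℝ := ∏ j : Fin n, (1 + ((d : ℝ) - 1) * ε j) with hPdef
  -- basic properties
  have hw0 : ∀ j a b, 0 ≤ w j a b := fun j a b => norm_nonneg _
  have hw1 : ∀ j a, w j a a ≤ 1 := fun j a => diag_bound (hV _) (hV _) a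
  have hε0 : ∀ j, 0 ≤ ε j := by
    intro j
    apply intervalIntegral.integral_nonneg (hτ (Fin.castSucc_lt_succ (i := j))).le
    intro t _; exact norm_nonneg _
  have hw2 : ∀ j a b, a ≠ b → w j a b ≤ ε j := by
    intro j a b hab
    calc w j a b ≤ ‖V j.castSucc - V j.succ‖ := offdiag_bound hd (hV j.succ) hab
      _ = ‖V j.succ - V j.castSucc‖ := norm_sub_rev _ _
      _ ≤ ε j := seg_bound γ hγdiff hγint (hτ (Fin.castSucc_lt_succ (i := j))).le
          (hτI j.castSucc).1 (hτI j.succ).2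
  have hF0 : ∀ k, 0 ≤ F k := fun k => Finset.prod_nonneg fun j _ => hw0 _ _ _
  have hG0 : ∀ s t, 0 ≤ G s t := fun s t => revprod_nonneg n w hw0 s t
  have hGP : ∀ s t, G s t ≤ P := fun s t => revprod_le hd n w ε hε0 hw0 hw1 hw2 s t
  have hP0 : 0 ≤ P := le_trans (hG0 0 0) (hGP 0 0)
  -- step 1: bound by deltas and F
  have step1 : ∑ kp : Fin (n + 1) → Fin d, ∑ km : Fin (n + 1) → Fin d,
      ‖genericBiProb V kp km‖
      ≤ ∑ kp : Fin (n + 1) → Fin d, ∑ km : Fin (n + 1) → Fin d,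
        (if kp (Fin.last n) = km (Fin.last n) then (1:ℝ) else 0) *
          (if kp 0 = km 0 then (1:ℝ) else 0) * (F kp * F km) :=
    Finset.sum_le_sum fun kp _ => Finset.sum_le_sum fun km _ =>
      norm_genericBiProb_le n V hV kp km
  -- inner sum evaluation
  have inner : ∀ kp : Fin (n + 1) → Fin d,
      ∑ km : Fin (n + 1) → Fin d,
        (if kp (Fin.last n) = km (Fin.last n) then (1:ℝ) else 0) *
          (if kp 0 = km 0 then (1:ℝ) else 0) * (F kp * F km)
        = F kp * G (kp (Fin.last n)) (kp 0) := by
    intro kp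
    rw [hGdef, ← sumM n w (kp (Fin.last n)) (kp 0), Finset.mul_sum]
    refine Finset.sum_congr rfl fun km _ => ?_
    by_cases h1 : kp (Fin.last n) = km (Fin.last n) <;>
      by_cases h2 : kp 0 = km 0 <;>
        simp [h1, h2, eq_comm, hFdef] <;> ring
  -- total F sum
  have totF : ∑ s : Fin d, ∑ t : Fin d, G s t = ∑ k : Fin (n + 1) → Fin d, F k := by
    rw [hGdef]
    simp only [← sumM n w]
    have hsw : ∀ s : Fin d, (∑ t : Fin d, ∑ k : Fin (n + 1) → Fin d,
        ((if k (Fin.last n) = s then (1:ℝ) else 0) * if k 0 = t then 1 else 0) *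
          ∏ j : Fin n, w j (k j.succ) (k j.castSucc))
        = ∑ k : Fin (n + 1) → Fin d, ∑ t : Fin d,
        ((if k (Fin.last n) = s then (1:ℝ) else 0) * if k 0 = t then 1 else 0) *
          ∏ j : Fin n, w j (k j.succ) (k j.castSucc) := fun s => Finset.sum_comm
    simp only [hsw]
    rw [Finset.sum_comm]
    refine Finset.sum_congr rfl fun k _ => ?_
    simp [ite_mul, zero_mul, one_mul, Finset.sum_ite_eq, hFdef]
  have totF_le : ∑ k : Fin (n + 1) → Fin d, F k ≤ (d:ℝ)^2 * P := by
    rw [← totF]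
    calc ∑ s : Fin d, ∑ t : Fin d, G s t ≤ ∑ _s : Fin d, ∑ _t : Fin d, P :=
          Finset.sum_le_sum fun s _ => Finset.sum_le_sum fun t _ => hGP s t
      _ = (d:ℝ)^2 * P := by simp [Finset.sum_const, Finset.card_univ]; ring
  -- combine
  have step2 : ∑ kp : Fin (n + 1) → Fin d, ∑ km : Fin (n + 1) → Fin d,
      (if kp (Fin.last n) = km (Fin.last n) then (1:ℝ) else 0) *
        (if kp 0 = km 0 then (1:ℝ) else 0) * (F kp * F km)
      ≤ (d:ℝ)^2 * (P * P) := by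
    calc ∑ kp : Fin (n + 1) → Fin d, ∑ km : Fin (n + 1) → Fin d,
        (if kp (Fin.last n) = km (Fin.last n) then (1:ℝ) else 0) *
          (if kp 0 = km 0 then (1:ℝ) else 0) * (F kp * F km)
        = ∑ kp : Fin (n + 1) → Fin d, F kp * G (kp (Fin.last n)) (kp 0) :=
          Finset.sum_congr rfl fun kp _ => inner kp
      _ ≤ ∑ kp : Fin (n + 1) → Fin d, F kp * P :=
          Finset.sum_le_sum fun kp _ =>
            mul_le_mul_of_nonneg_left (hGP _ _) (hF0 kp)
      _ = (∑ kp : Fin (n + 1) → Fin d, F kp) * P := by rw [Finset.sum_mul]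
      _ ≤ ((d:ℝ)^2 * P) * P := mul_le_mul_of_nonneg_right totF_le hP0
      _ = (d:ℝ)^2 * (P * P) := by ring
  -- length bound
  have hsum_eps : ∑ j : Fin n, ε j ≤ ∫ t in (0:ℝ)..1, ‖deriv γ t‖ := by
    set A : ℕ → ℝ := fun i => τ ⟨min i n, by omega⟩ with hAdef
    have hAeq : ∀ (i : ℕ) (hi : i ≤ n), A i = τ ⟨i, by omega⟩ := by
      intro i hi
      simp only [hAdef]
      congr 1
      exact Fin.ext (by simp [min_eq_left hi])
    have hAmono : Monotone A := by
      intro i j hij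
      exact (hτ.monotone) (by simp [Fin.le_def, min_le_min_right _ hij])
    have hA0 : ∀ i, 0 ≤ A i := fun i => (hτI _).1
    have hA1 : ∀ i, A i ≤ 1 := fun i => (hτI _).2
    have heps : ∀ j : Fin n, ε j = ∫ t in (A j)..(A (j + 1 : ℕ)), ‖deriv γ t‖ := by
      intro j
      have h1 : A j = τ j.castSucc := by
        rw [hAeq j (le_of_lt j.isLt)]
        congr 1
      have h2 : A (j + 1 : ℕ) = τ j.succ := by
        rw [hAeq (j + 1) j.isLt]
        congr 1
      rw [hεdef, h1, h2]
    calc ∑ j : Fin n, ε j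
        = ∑ i ∈ Finset.range n, ∫ t in (A i)..(A (i + 1)), ‖deriv γ t‖ := by
          rw [← Fin.sum_univ_eq_sum_range]
          exact Finset.sum_congr rfl fun j _ => heps j
      _ = ∫ t in (A 0)..(A n), ‖deriv γ t‖ :=
          intervalIntegral.sum_integral_adjacent_intervals fun k _ =>
            f_intble γ hγint (hAmono (Nat.le_succ k)) (hA0 k) (hA1 (k + 1))
      _ ≤ ∫ t in (0:ℝ)..1, ‖deriv γ t‖ := by
          refine intervalIntegral.integral_mono_interval (hA0 0) (hAmono (Nat.zero_le n))
            (hA1 n) ?_ (f_intble γ hγint zero_le_one le_rfl le_rfl)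
          filter_upwards with t using norm_nonneg _
  have hPexp : P ≤ Real.exp (((d:ℝ) - 1) * ∫ t in (0:ℝ)..1, ‖deriv γ t‖) := by
    calc P ≤ ∏ j : Fin n, Real.exp (((d:ℝ) - 1) * ε j) :=
          Finset.prod_le_prod (fun j _ => by nlinarith [hε0 j]) (fun j _ => by
            have := Real.add_one_le_exp (((d:ℝ) - 1) * ε j)
            linarith)
      _ = Real.exp (∑ j : Fin n, ((d:ℝ) - 1) * ε j) := by rw [Real.exp_sum]
      _ ≤ Real.exp (((d:ℝ) - 1) * ∫ t in (0:ℝ)..1, ‖deriv γ t‖) := by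
          apply Real.exp_le_exp.mpr
          rw [← Finset.mul_sum]
          exact mul_le_mul_of_nonneg_left hsum_eps (by linarith)
  refine le_trans (le_trans step1 step2) ?_
  have : P * P ≤ Real.exp (2 * ((d : ℝ) - 1) * ∫ t in (0:ℝ)..1, ‖deriv γ t‖) := by
    calc P * P ≤ Real.exp (((d:ℝ) - 1) * ∫ t in (0:ℝ)..1, ‖deriv γ t‖) *
          Real.exp (((d:ℝ) - 1) * ∫ t in (0:ℝ)..1, ‖deriv γ t‖) :=
          mul_le_mul hPexp hPexp hP0 (Real.exp_nonneg _)
      _ = Real.exp (2 * ((d : ℝ) - 1) * ∫ t in (0:ℝ)..1, ‖deriv γ t‖) := by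
          rw [← Real.exp_add]; ring_nf
  have hd2 : (0:ℝ) ≤ (d:ℝ)^2 := by positivity
  calc (d:ℝ)^2 * (P * P) ≤ (d:ℝ)^2 * Real.exp (2 * ((d : ℝ) - 1) * ∫ t in (0:ℝ)..1, ‖deriv γ t‖) :=
        mul_le_mul_of_nonneg_left this hd2
    _ = _ := rfl
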